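/- arXiv:1402.5668 — 5 statements merged into one kernel-verified Lean document; each statement's English description precedes it below -/
import Mathlib

section
/- Let c₀, c₁, …, c_{N−1} ∈ ℂ with c₁ = 0, and suppose the Hermitian Toeplitz matrix R = Toep(c₀, …, c_{N−1}) is positive semidefinite. Then for any k with 2k+1 ≤ N−1, one has |c_{2k}|² + |c_{2k+1}|² ≤ c₀². -/
open scoped ComplexOrder

/-- If the Hermitian Toeplitz matrix `R` with entries `R p q = c (p - q)` is positive
semidefinite and `c 1 = 0`, then `|c (2k)|² + |c (2k+1)|² ≤ c₀²` whenever `2k+1 ≤ N-1`. -/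
theorem toeplitz_posSemidef_pair_sq_le
    (N : ℕ) (c : ℤ → ℂ)
    (hherm : ∀ k : ℤ, c (-k) = starRingEnd ℂ (c k))
    (R : Matrix (Fin N) (Fin N) ℂ)
    (hR : ∀ p q : Fin N, R p q = c ((p : ℤ) - (q : ℤ)))
    (hpsd : R.PosSemidef) (hc1 : c 1 = 0) :
    ∀ k : ℕ, 2 * k + 1 ≤ N - 1 →
      ‖c (2 * k)‖ ^ 2 + ‖c (2 * k + 1)‖ ^ 2 ≤ (c 0).re ^ 2 := by
  intro k hk
  have hN : 2 * k + 1 < N := by omega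
  have h0N : (0:ℕ) < N := by omega
  set r := (c 0).re with hrdef
  have him : (c 0).im = 0 := by
    have h := congrArg Complex.im (by simpa using hherm 0 : c 0 = starRingEnd ℂ (c 0))
    simp only [Complex.conj_im] at h
    linarith
  have hc0 : c 0 = (r:ℂ) := by
    apply Complex.ext <;> simp [hrdef, him]
  have hr0 : 0 ≤ r := by
    have h := hpsd.dotProduct_mulVec_nonneg (Pi.single (⟨0, h0N⟩ : Fin N) 1)
    simp [dotProduct, Matrix.mulVec, Pi.single_apply, hR, Finset.mul_sum,
      mul_ite, ite_mul] at h
    rw [Complex.le_def] at h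
    simpa [hrdef] using h.1
  rw [Complex.sq_norm, Complex.sq_norm]
  rcases Nat.eq_zero_or_pos k with hk0 | hk1
  · subst hk0
    norm_num [hc1, hc0, Complex.normSq_ofReal]
    nlinarith
  · -- main case: k ≥ 1
    set m : ℕ := 2 * k with hm
    have h1 : m < N := by omega
    have h2 : m + 1 < N := by omega
    set A := c ((m:ℤ)) with hA
    set B := c ((m:ℤ) + 1) with hB
    set S : ℝ := Complex.normSq A + Complex.normSq B with hS
    have key : ∀ a : ℝ, 0 ≤ r * a ^ 2 - 2 * a * S + r * S := by
      intro a
      set p0 : Fin N := ⟨0, h0N⟩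
      set p1 : Fin N := ⟨m, h1⟩
      set p2 : Fin N := ⟨m + 1, h2⟩
      set z : Fin N → ℂ :=
        Pi.single p0 (a:ℂ) + Pi.single p1 (-c m) + Pi.single p2 (-c (m+1)) with hz
      have h := hpsd.dotProduct_mulVec_nonneg z
      rw [hz] at h
      simp only [Matrix.mulVec_add, Matrix.mulVec_single, star_add, ← Pi.single_star,
        add_dotProduct, single_dotProduct, Pi.add_apply, Pi.smul_apply, op_smul_eq_mul, Matrix.col_apply, hR, p0, p1, p2] at h
      norm_num at h
      have hm1 : c (-1) = 0 := by rw [hherm 1, hc1]; simp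
      have hmm : c (-(m:ℤ)) = starRingEnd ℂ (c m) := hherm m
      have hmm1 : c (-1 + -(m:ℤ)) = starRingEnd ℂ (c ((m:ℤ)+1)) := by
        rw [show (-1 + -(m:ℤ)) = -((m:ℤ)+1) by ring, hherm]
      rw [hc1, hm1, hmm, hmm1, hc0] at h
      have hL : (starRingEnd ℂ) B * (B*(a:ℂ) + -(0*A) + -((r:ℂ)*B)) +
          (starRingEnd ℂ) A * (A*(a:ℂ) + -((r:ℂ)*A) + -(0*B)) =
          (((Complex.normSq A + Complex.normSq B)*(a-r) : ℝ):ℂ) := by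
        push_cast
        linear_combination ((r:ℂ) - a) * (Complex.normSq_eq_conj_mul_self (z := A)) +
          ((r:ℂ) - a) * (Complex.normSq_eq_conj_mul_self (z := B))
      have hRHS : (a:ℂ) * ((r:ℂ) * (a:ℂ) + -((starRingEnd ℂ) A * A) + -((starRingEnd ℂ) B * B)) =
          (((r*a^2 - a*(Complex.normSq A + Complex.normSq B)) : ℝ):ℂ) := by
        push_cast
        linear_combination ((a:ℂ)) * (Complex.normSq_eq_conj_mul_self (z := A)) +
          ((a:ℂ)) * (Complex.normSq_eq_conj_mul_self (z := B))
      rw [hL, hRHS, Complex.real_le_real] at h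
      simp only [hS]
      nlinarith [h]
    have hS0 : 0 ≤ S := by rw [hS]; exact add_nonneg (Complex.normSq_nonneg A) (Complex.normSq_nonneg B)
    have hgoal : S ≤ r ^ 2 := by
      rcases eq_or_lt_of_le hr0 with h0 | hpos
      · have h1' := key 1
        rw [← h0] at h1' ⊢
        nlinarith
      · have hr' := key r
        nlinarith
    have hcast1 : c (2 * (k:ℤ)) = A := by rw [hA]; norm_num [hm]
    have hcast2 : c (2 * (k:ℤ) + 1) = B := by rw [hB]; norm_num [hm]
    calc Complex.normSq (c (2 * k)) + Complex.normSq (c (2 * k + 1)) = S := by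
          rw [hS, show ((2 * k : ℕ) : ℤ) = 2 * (k:ℤ) from by push_cast; ring] at *
          rw [hcast1, hcast2]
      _ ≤ r ^ 2 := hgoal
end

section
/- Let c₀, c₁, …, c_{N−1} ∈ ℂ with c₁ = 0, and suppose the Hermitian Toeplitz matrix R = Toep(c₀, …, c_{N−1}) is positive semidefinite. Then ∑_{p=2}^{N−1} |c_p|²/(p²−1) ≤ (c₀²/2)(1 − 1/N). -/
open scoped ComplexOrder

private lemma toeplitz_key_ineq
    (N : ℕ) (c : ℤ → ℂ)
    (hherm : ∀ k : ℤ, c (-k) = starRingEnd ℂ (c k))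
    (R : Matrix (Fin N) (Fin N) ℂ)
    (hR : ∀ p q : Fin N, R p q = c ((p : ℤ) - (q : ℤ)))
    (hpsd : R.PosSemidef) (hc1 : c 1 = 0) (p : ℕ) (hp2 : 2 ≤ p) (hpN : p < N) :
    ‖c ((p:ℤ)-1)‖ ^ 2 + ‖c (p:ℤ)‖ ^ 2 ≤ (c 0).re ^ 2 := by
  have hc0 : ((c 0).re : ℂ) = c 0 := by
    apply Complex.conj_eq_iff_re.mp
    have := hherm 0; rw [neg_zero] at this; exact this.symm
  obtain ⟨A, hA⟩ : ∃ A : ℝ, c 0 = (A:ℂ) := ⟨(c 0).re, hc0.symm⟩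
  have hAre : (c 0).re = A := by rw [hA]; simp
  rw [hAre]
  set B : ℝ := ‖c ((p:ℤ)-1)‖ ^ 2 + ‖c (p:ℤ)‖ ^ 2 with hB
  have hQ : ∀ t s : ℝ, 0 ≤ A * t^2 + 2*t*s*B + A * B * s^2 := by
    intro t s
    have h0 : 0 < N := by omega
    have h1 : p - 1 < N := by omega
    set i0 : Fin N := ⟨0, h0⟩
    set i1 : Fin N := ⟨p-1, h1⟩
    set i2 : Fin N := ⟨p, hpN⟩
    set f : Fin 3 → Fin N := ![i0, i1, i2] with hf
    set x : Fin 3 → ℂ := ![(t:ℂ), s * c ((p:ℤ)-1), s * c (p:ℤ)] with hx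
    have h := (hpsd.submatrix f).dotProduct_mulVec_nonneg x
    simp only [dotProduct, Matrix.mulVec, Fin.sum_univ_three, Matrix.submatrix_apply,
      hf, hx, Matrix.cons_val_zero, Matrix.cons_val_one, Matrix.head_cons, Matrix.cons_val_two,
      Matrix.tail_cons, Pi.star_apply] at h
    rw [hR, hR, hR, hR, hR, hR, hR, hR, hR] at h
    have e0 : ((i0 : ℕ) : ℤ) = 0 := by simp [i0]
    have e1 : ((i1 : ℕ) : ℤ) = (p:ℤ) - 1 := by
      simp only [i1]; omega
    have e2 : ((i2 : ℕ) : ℤ) = (p:ℤ) := by simp [i2]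
    rw [e0, e1, e2] at h
    have k1 : (0:ℤ) - ((p:ℤ)-1) = -((p:ℤ)-1) := by ring
    have k2 : (0:ℤ) - (p:ℤ) = -(p:ℤ) := by ring
    have k3 : ((p:ℤ)-1) - (p:ℤ) = -(1:ℤ) := by ring
    have k4 : ((p:ℤ)-1) - 0 = (p:ℤ)-1 := by ring
    have k5 : ((p:ℤ)) - 0 = (p:ℤ) := by ring
    have k6 : ((p:ℤ)) - ((p:ℤ)-1) = 1 := by ring
    have k0 : (0:ℤ) - 0 = 0 := by ring
    have k7 : ((p:ℤ)-1) - ((p:ℤ)-1) = 0 := by ring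
    have k8 : ((p:ℤ)) - ((p:ℤ)) = 0 := by ring
    rw [k0, k1, k2, k3, k4, k5, k6, k7, k8, hherm, hherm, hherm, hc1] at h
    rw [hA] at h
    have habs : ∀ z : ℂ, ((‖z‖ ^ 2 : ℝ) : ℂ) = (starRingEnd ℂ) z * z := by
      intro z
      rw [Complex.sq_norm, Complex.normSq_eq_conj_mul_self]
    have hX : star (↑t:ℂ) * ((A:ℂ) * ↑t + (starRingEnd ℂ) (c (↑p - 1)) * (↑s * c (↑p - 1)) + (starRingEnd ℂ) (c ↑p) * (↑s * c ↑p)) +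
          star (↑s * c (↑p - 1)) * (c (↑p - 1) * ↑t + (A:ℂ) * (↑s * c (↑p - 1)) + (starRingEnd ℂ) 0 * (↑s * c ↑p)) +
        star (↑s * c ↑p) * (c ↑p * ↑t + 0 * (↑s * c (↑p - 1)) + (A:ℂ) * (↑s * c ↑p))
        = ((A * t^2 + 2*t*s*B + A * B * s^2 : ℝ) : ℂ) := by
      rw [hB]
      push_cast [habs]
      simp only [star_mul', RCLike.star_def, Complex.conj_ofReal, map_zero, zero_mul,
        mul_zero, add_zero]
      ring
    rw [hX] at h
    exact_mod_cast h
  have hA0 : 0 ≤ A := by have := hQ 1 0; nlinarith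
  have hB0 : 0 ≤ B := by positivity
  rcases eq_or_lt_of_le hB0 with h|h
  · nlinarith [sq_nonneg A]
  · rcases eq_or_lt_of_le hA0 with h'|h'
    · have := hQ 1 (-1); nlinarith
    · have h1 := hQ B (-A)
      nlinarith [mul_pos h' h]

/-- If the Hermitian Toeplitz matrix `R` with entries `R p q = c (p - q)` is positive
semidefinite and `c 1 = 0`, then `∑_{p=2}^{N-1} |c p|²/(p² - 1) ≤ (c₀²/2)(1 - 1/N)`. -/
theorem toeplitz_posSemidef_series_estimate
    (N : ℕ) (c : ℤ → ℂ)
    (hherm : ∀ k : ℤ, c (-k) = starRingEnd ℂ (c k))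
    (R : Matrix (Fin N) (Fin N) ℂ)
    (hR : ∀ p q : Fin N, R p q = c ((p : ℤ) - (q : ℤ)))
    (hpsd : R.PosSemidef) (hc1 : c 1 = 0) :
    ∑ p ∈ Finset.Icc 2 (N - 1), ‖c (p : ℤ)‖ ^ 2 / ((p : ℝ) ^ 2 - 1)
      ≤ (c 0).re ^ 2 / 2 * (1 - 1 / (N : ℝ)) := by
  set A := (c 0).re with hA
  by_cases hN : N ≤ 2
  · -- trivial case: empty sum
    have he : Finset.Icc 2 (N-1) = ∅ := Finset.Icc_eq_empty (by omega)
    rw [he, Finset.sum_empty]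
    have h1 : 1 / (N:ℝ) ≤ 1 := by
      rcases Nat.eq_zero_or_pos N with h|h
      · subst h; norm_num
      · apply div_le_one_of_le₀
        · exact_mod_cast h
        · positivity
    have : (0:ℝ) ≤ 1 - 1/(N:ℝ) := by linarith
    positivity
  · push_neg at hN
    -- key inequality
    have key : ∀ p : ℕ, 2 ≤ p → p < N →
        ‖c ((p:ℤ)-1)‖ ^ 2 + ‖c (p:ℤ)‖ ^ 2 ≤ A ^ 2 := by
      intro p h2 hN'
      exact toeplitz_key_ineq N c hherm R hR hpsd hc1 p h2 hN'
    have hb1 : ‖c (1:ℤ)‖ ^ 2 = 0 := by rw [hc1]; simp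
    -- main induction
    have L : ∀ M : ℕ, 1 ≤ M → M ≤ N - 1 →
        ∑ p ∈ Finset.Icc 2 M, ‖c (p : ℤ)‖ ^ 2 / ((p : ℝ) ^ 2 - 1)
          ≤ A ^ 2 / 2 * (1 - 1 / (M:ℝ))
            + ‖c (M:ℤ)‖ ^ 2 / (2 * (M:ℝ) * ((M:ℝ) + 1)) := by
      intro M
      induction M with
      | zero => intro h1 _; exact absurd h1 (by omega)
      | succ M ih =>
        intro _ h2
        by_cases hM : M = 0
        · subst hM
          rw [show Finset.Icc 2 1 = ∅ from Finset.Icc_eq_empty (by omega), Finset.sum_empty]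
          have : ‖c ((1:ℕ):ℤ)‖ ^ 2 = 0 := by exact_mod_cast hb1
          rw [this]
          norm_num
        · have hM1 : 1 ≤ M := by omega
          have ihh := ih hM1 (by omega)
          rw [Finset.sum_Icc_succ_top (by omega : 2 ≤ M + 1)]
          have hkey := key (M+1) (by omega) (by omega)
          have ecast : ((M+1:ℕ):ℤ) - 1 = (M:ℤ) := by push_cast; ring
          rw [ecast] at hkey
          set bM : ℝ := ‖c (M:ℤ)‖ ^ 2 with hbM
          set bM1 : ℝ := ‖c ((M+1:ℕ):ℤ)‖ ^ 2 with hbM1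
          set m : ℝ := (M:ℝ) with hm
          have hm1 : (1:ℝ) ≤ m := by rw [hm]; exact_mod_cast hM1
          have hm0 : (0:ℝ) < m := by linarith
          have castM1 : ((M+1:ℕ):ℝ) = m + 1 := by push_cast; ring
          rw [castM1]
          have hne0 : m ≠ 0 := by linarith
          have hne1 : m + 1 ≠ 0 := by linarith
          have hne2 : m + 2 ≠ 0 := by linarith
          have i1' : bM1 / ((m+1)^2 - 1) = bM1/(2*m*(m+1)) + bM1/(2*(m+1)*(m+2)) := by
            rw [show (m+1)^2 - 1 = m*(m+2) from by ring]
            field_simp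
            ring
          have i2 : A^2/2*(1-1/(m+1)) - A^2/2*(1-1/m) = A^2/(2*m*(m+1)) := by
            field_simp
            ring
          have hden : (0:ℝ) < 2*m*(m+1) := by nlinarith
          have i3 : (bM + bM1)/(2*m*(m+1)) ≤ A^2/(2*m*(m+1)) :=
            (div_le_div_iff_of_pos_right hden).mpr hkey
          have i4 : bM/(2*m*(m+1)) + bM1/(2*m*(m+1)) = (bM + bM1)/(2*m*(m+1)) := by
            ring
          have i5 : bM1/(2*(m+1)*(m+1+1)) = bM1/(2*(m+1)*(m+2)) := by ring_nf
          linarith [ihh, i1', i2, i3, i4, i5]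
    -- conclude
    have hL := L (N-1) (by omega) le_rfl
    have hkey2 : ‖c ((N-1:ℕ):ℤ)‖ ^ 2 ≤ A ^ 2 := by
      have h := key (N-1) (by omega) (by omega)
      nlinarith [sq_nonneg (‖c (((N-1:ℕ):ℤ)-1)‖)]
    set bN : ℝ := ‖c ((N-1:ℕ):ℤ)‖ ^ 2 with hbN
    have castN : ((N-1:ℕ):ℝ) = (N:ℝ) - 1 := by
      have : (1:ℕ) ≤ N := by omega
      push_cast [Nat.cast_sub this]
      ring
    rw [castN] at hL
    set n : ℝ := (N:ℝ) with hn
    have hn3 : (2:ℝ) < n := by rw [hn]; exact_mod_cast hN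
    have hid : A^2/2*(1-1/(n-1)) + A^2/(2*(n-1)*n) = A^2/2*(1-1/n) := by
      have h1 : n - 1 ≠ 0 := by linarith
      have h2 : n ≠ 0 := by linarith
      field_simp
      ring
    have hfin : bN / (2*(n-1)*((n-1)+1)) ≤ A^2/(2*(n-1)*n) := by
      have e : (n-1) + 1 = n := by ring
      rw [e]
      have hden : (0:ℝ) < 2*(n-1)*n := by nlinarith
      exact (div_le_div_iff_of_pos_right hden).mpr hkey2
    linarith [hL, hfin, hid]
end

section
/- Let P₀ = diag(p₀, p₁, …, p_{N−1}, q₀, q₁, …, q_{N−1}) be a real n×n matrix with n = 2N, p₀ < 0, q₀ ≤ 0, p₁ = q₁ = 0, and p_k, q_k > 0 for k = 2,…,N−1. Let A be the 2×n matrix with rows (αᵀ, βᵀ) and (0_Nᵀ, e₁ᵀ), where α, β ∈ ℝ^N satisfy α₁ = β₁ = 0. If ϱ > −q₀ ≥ 0 and ∑_{k=2}^{N−1}(α_k²/p_k + β_k²/q_k) ≤ α₀²/(−p₀) − 1/ϱ − β₀²/(q₀+ϱ), then P₀ + ϱ AᵀA is positive semidefinite. -/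
set_option maxHeartbeats 1000000

open Finset Matrix

lemma cs_weighted {ι : Type*} (s : Finset ι) (a w z : ι → ℝ)
    (hw : ∀ i ∈ s, 0 < w i) :
    (∑ i ∈ s, a i * z i) ^ 2 ≤ (∑ i ∈ s, a i ^ 2 / w i) * (∑ i ∈ s, w i * z i ^ 2) := by
  have h := Finset.sum_mul_sq_le_sq_mul_sq s (fun i => a i / Real.sqrt (w i))
    (fun i => Real.sqrt (w i) * z i)
  have e1 : ∀ i ∈ s, a i / Real.sqrt (w i) * (Real.sqrt (w i) * z i) = a i * z i := by
    intro i hi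
    have hs : Real.sqrt (w i) ≠ 0 := by
      have := Real.sqrt_pos.mpr (hw i hi)
      linarith
    field_simp
  have e2 : ∀ i ∈ s, (a i / Real.sqrt (w i)) ^ 2 = a i ^ 2 / w i := by
    intro i hi
    rw [div_pow, Real.sq_sqrt (hw i hi).le]
  have e3 : ∀ i ∈ s, (Real.sqrt (w i) * z i) ^ 2 = w i * z i ^ 2 := by
    intro i hi
    rw [mul_pow, Real.sq_sqrt (hw i hi).le]
  rwa [Finset.sum_congr rfl e1, Finset.sum_congr rfl e2, Finset.sum_congr rfl e3] at h

lemma sum_split {N : ℕ} [NeZero N] (hN : 2 ≤ N) (f : Fin N → ℝ) :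
    ∑ k, f k = f 0 + f 1 + ∑ k ∈ univ.filter (fun k : Fin N => 2 ≤ (k : ℕ)), f k := by
  classical
  have h1v : ((1 : Fin N) : ℕ) = 1 := by
    rw [Fin.val_one']
    exact Nat.mod_eq_of_lt (by omega)
  have hset : univ.filter (fun k : Fin N => ¬ 2 ≤ (k : ℕ)) = {0, 1} := by
    ext k
    simp only [mem_filter, mem_univ, true_and, mem_insert, mem_singleton, Fin.ext_iff, h1v,
      Fin.val_zero, not_le]
    omega
  have h01 : (0 : Fin N) ∉ ({1} : Finset (Fin N)) := by
    simp only [mem_singleton, Fin.ext_iff, h1v, Fin.val_zero]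
    omega
  rw [← Finset.sum_filter_add_sum_filter_not univ (fun k : Fin N => 2 ≤ (k : ℕ)) f, hset,
    Finset.sum_insert h01, Finset.sum_singleton]
  ring

lemma key_ineq
    (N : ℕ) [NeZero N] (hN : 2 ≤ N)
    (p q α β : Fin N → ℝ)
    (hp0 : p 0 < 0) (hq0 : q 0 ≤ 0) (hp1 : p 1 = 0) (hq1 : q 1 = 0)
    (hpk : ∀ k : Fin N, 2 ≤ (k : ℕ) → 0 < p k)
    (hqk : ∀ k : Fin N, 2 ≤ (k : ℕ) → 0 < q k)
    (hα1 : α 1 = 0) (hβ1 : β 1 = 0)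
    (ϱ : ℝ) (hϱ : -q 0 < ϱ)
    (hsum : ∑ k ∈ Finset.univ.filter (fun k : Fin N => 2 ≤ (k : ℕ)),
        (α k ^ 2 / p k + β k ^ 2 / q k)
      ≤ α 0 ^ 2 / (-(p 0)) - 1 / ϱ - β 0 ^ 2 / (q 0 + ϱ))
    (X Y : Fin N → ℝ) :
    0 ≤ (∑ k, p k * X k ^ 2) + (∑ k, q k * Y k ^ 2) +
      ϱ * (((∑ k, α k * X k) + ∑ k, β k * Y k) ^ 2 + Y 0 ^ 2) := by
  classical
  have hϱ0 : 0 < ϱ := lt_of_le_of_lt (by linarith) hϱ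
  have hq0ϱ : 0 < q 0 + ϱ := by linarith
  have h1v : ((1 : Fin N) : ℕ) = 1 := by
    rw [Fin.val_one']; exact Nat.mod_eq_of_lt (by omega)
  set F : Finset (Fin N) := Finset.univ.filter (fun k : Fin N => 2 ≤ (k : ℕ)) with hF
  have hmemF : ∀ k : Fin N, k ∈ F ↔ 2 ≤ (k : ℕ) := by
    intro k; simp [hF]
  set s : ℝ := (∑ k, α k * X k) + ∑ k, β k * Y k with hs
  set S : ℝ := ∑ k ∈ F, (α k ^ 2 / p k + β k ^ 2 / q k) with hS
  set K : ℝ := 1 / ϱ + β 0 ^ 2 / (q 0 + ϱ) + S with hK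
  have hS0 : 0 ≤ S := by
    apply Finset.sum_nonneg
    intro k hk
    have h2 := (hmemF k).mp hk
    have := hpk k h2
    have := hqk k h2
    positivity
  have hKpos : 0 < K := by
    have : 0 < 1 / ϱ := by positivity
    have : 0 ≤ β 0 ^ 2 / (q 0 + ϱ) := by positivity
    rw [hK]; linarith
  have hKle : K ≤ α 0 ^ 2 / (-(p 0)) := by rw [hK]; linarith
  have hKp : K * (-(p 0)) ≤ α 0 ^ 2 := (le_div_iff₀ (by linarith)).mp hKle
  have hα0 : 0 < α 0 ^ 2 := lt_of_lt_of_le (mul_pos hKpos (by linarith)) hKp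
  -- Cauchy–Schwarz set-up
  set ι := (Fin N ⊕ Fin N) ⊕ Unit with hι
  set a : ι → ℝ := Sum.elim (Sum.elim (fun k => if k = 0 then 0 else -α k) (fun k => -β k))
    (fun _ => 1) with ha
  set w : ι → ℝ := Sum.elim (Sum.elim (fun k => if 2 ≤ (k : ℕ) then p k else 1)
    (fun k => if k = 0 then q 0 + ϱ else if 2 ≤ (k : ℕ) then q k else 1)) (fun _ => ϱ) with hw
  set z : ι → ℝ := Sum.elim (Sum.elim X Y) (fun _ => s) with hz
  set P : ι → Prop := Sum.elim (Sum.elim (fun k : Fin N => 2 ≤ (k : ℕ))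
    (fun k : Fin N => k = 0 ∨ 2 ≤ (k : ℕ))) (fun _ => True) with hP
  set G : Finset ι := Finset.univ.filter P with hG
  have hwpos : ∀ i ∈ G, 0 < w i := by
    rintro ((k | k) | u) hi
    · have : 2 ≤ (k : ℕ) := by simpa [hG, hP] using hi
      simpa [hw, this] using hpk k this
    · have h : k = 0 ∨ 2 ≤ (k : ℕ) := by simpa [hG, hP] using hi
      rcases h with h | h
      · simpa [hw, h] using hq0ϱ
      · have hk0 : k ≠ 0 := by
          intro hc; rw [hc] at h; simp at h
        simpa [hw, hk0, h] using hqk k h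
    · simpa [hw] using hϱ0
  have hk0 : ∀ k : Fin N, 2 ≤ (k : ℕ) → k ≠ 0 := by
    intro k h hc
    rw [hc] at h
    simp at h
  have hne10 : (1 : Fin N) ≠ 0 := by
    intro h
    rw [Fin.ext_iff, h1v] at h
    simp at h
  -- E1 : the filtered sum of a i * z i
  have hcompl : ∑ i ∈ Finset.univ.filter (fun i => ¬ P i), a i * z i = 0 := by
    apply Finset.sum_eq_zero
    rintro ((k | k) | u) hi
    · have hk : ¬ 2 ≤ (k : ℕ) := by simpa [hP] using hi
      by_cases h0 : k = 0
      · simp [ha, hz, h0]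
      · have hv : (k : ℕ) = 1 := by
          have : (k : ℕ) ≠ 0 := fun hc => h0 (Fin.ext (by rw [hc]; rfl))
          omega
        have hk1 : k = 1 := Fin.ext (by rw [h1v, hv])
        simp [ha, hz, hk1, hα1, hne10]
    · have hk : ¬ (k = 0 ∨ 2 ≤ (k : ℕ)) := by simpa [hP] using hi
      push_neg at hk
      have hv : (k : ℕ) = 1 := by
        have : (k : ℕ) ≠ 0 := fun hc => hk.1 (Fin.ext (by rw [hc]; rfl))
        have := hk.2
        omega
      have hk1 : k = 1 := Fin.ext (by rw [h1v, hv])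
      simp [ha, hz, hk1, hβ1]
    · exfalso
      simpa [hP] using hi
  have huniv : ∑ i, a i * z i = α 0 * X 0 := by
    rw [Fintype.sum_sum_type, Fintype.sum_sum_type]
    have e : ∀ k : Fin N, a (Sum.inl (Sum.inl k)) * z (Sum.inl (Sum.inl k))
        = -(α k * X k) + (if k = 0 then α k * X k else 0) := by
      intro k
      by_cases h : k = 0 <;> simp [ha, hz, h]
    rw [Finset.sum_congr rfl (fun k _ => e k), Finset.sum_add_distrib]
    have e2 : ∀ k : Fin N, a (Sum.inl (Sum.inr k)) * z (Sum.inl (Sum.inr k))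
        = -(β k * Y k) := by
      intro k
      simp [ha, hz]
    rw [Finset.sum_congr rfl (fun k _ => e2 k)]
    simp only [Finset.sum_neg_distrib, Finset.sum_ite_eq', Finset.mem_univ, if_true]
    simp [ha, hz, hs]
    ring
  have E1 : ∑ i ∈ G, a i * z i = α 0 * X 0 := by
    have hsp := Finset.sum_filter_add_sum_filter_not Finset.univ P (fun i => a i * z i)
    rw [hG]
    rw [hcompl] at hsp
    rw [huniv] at hsp
    linarith
  -- E2 : the filtered sum of a i ^ 2 / w i equals K
  have E2 : ∑ i ∈ G, a i ^ 2 / w i = K := by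
    rw [hG, Finset.sum_filter, Fintype.sum_sum_type, Fintype.sum_sum_type]
    have e1 : ∀ k : Fin N, (if P (Sum.inl (Sum.inl k)) then
        a (Sum.inl (Sum.inl k)) ^ 2 / w (Sum.inl (Sum.inl k)) else 0)
        = (if 2 ≤ (k : ℕ) then α k ^ 2 / p k else 0) := by
      intro k
      by_cases h : 2 ≤ (k : ℕ)
      · simp [ha, hw, hP, h, hk0 k h]
      · simp [hP, h]
    have e2 : ∀ k : Fin N, (if P (Sum.inl (Sum.inr k)) then
        a (Sum.inl (Sum.inr k)) ^ 2 / w (Sum.inl (Sum.inr k)) else 0)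
        = (if k = 0 then β 0 ^ 2 / (q 0 + ϱ) else if 2 ≤ (k : ℕ) then β k ^ 2 / q k else 0) := by
      intro k
      by_cases h0 : k = 0
      · simp [ha, hw, hP, h0]
      · by_cases h : 2 ≤ (k : ℕ)
        · simp [ha, hw, hP, h0, h]
        · simp [hP, h0, h]
    rw [Finset.sum_congr rfl (fun k _ => e1 k), Finset.sum_congr rfl (fun k _ => e2 k)]
    have s1 : ∑ k : Fin N, (if 2 ≤ (k : ℕ) then α k ^ 2 / p k else 0)
        = ∑ k ∈ F, α k ^ 2 / p k := by
      rw [hF, ← Finset.sum_filter]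
    have s2 : ∑ k : Fin N, (if k = 0 then β 0 ^ 2 / (q 0 + ϱ)
          else if 2 ≤ (k : ℕ) then β k ^ 2 / q k else 0)
        = β 0 ^ 2 / (q 0 + ϱ) + ∑ k ∈ F, β k ^ 2 / q k := by
      rw [sum_split hN]
      have g0 : (if (0 : Fin N) = 0 then β 0 ^ 2 / (q 0 + ϱ)
          else if 2 ≤ ((0 : Fin N) : ℕ) then β 0 ^ 2 / q 0 else 0) = β 0 ^ 2 / (q 0 + ϱ) := by
        simp
      have g1 : (if (1 : Fin N) = 0 then β 0 ^ 2 / (q 0 + ϱ)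
          else if 2 ≤ ((1 : Fin N) : ℕ) then β 1 ^ 2 / q 1 else 0) = 0 := by
        simp [hne10, hβ1]
      rw [g0, g1, Finset.sum_congr rfl (fun k hk => ?_)]
      · ring
      · have h2 : 2 ≤ (k : ℕ) := (hmemF k).mp hk
        simp [hk0 k h2, h2]
    rw [s1, s2]
    have s3 : ∑ _x : Unit, (if P (Sum.inr _x) then a (Sum.inr _x) ^ 2 / w (Sum.inr _x) else 0)
        = 1 / ϱ := by
      simp [ha, hw, hP]
    rw [s3, hK, hS, Finset.sum_add_distrib]
    ring
  -- E3 : the filtered sum of w i * z i ^ 2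
  set Tp : ℝ := ∑ k ∈ F, p k * X k ^ 2 with hTp
  set Tq : ℝ := ∑ k ∈ F, q k * Y k ^ 2 with hTq
  have E3 : ∑ i ∈ G, w i * z i ^ 2 = ϱ * s ^ 2 + (q 0 + ϱ) * Y 0 ^ 2 + (Tp + Tq) := by
    rw [hG, Finset.sum_filter, Fintype.sum_sum_type, Fintype.sum_sum_type]
    have e1 : ∀ k : Fin N, (if P (Sum.inl (Sum.inl k)) then
        w (Sum.inl (Sum.inl k)) * z (Sum.inl (Sum.inl k)) ^ 2 else 0)
        = (if 2 ≤ (k : ℕ) then p k * X k ^ 2 else 0) := by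
      intro k
      by_cases h : 2 ≤ (k : ℕ)
      · simp [hw, hz, hP, h]
      · simp [hP, h]
    have e2 : ∀ k : Fin N, (if P (Sum.inl (Sum.inr k)) then
        w (Sum.inl (Sum.inr k)) * z (Sum.inl (Sum.inr k)) ^ 2 else 0)
        = (if k = 0 then (q 0 + ϱ) * Y 0 ^ 2 else if 2 ≤ (k : ℕ) then q k * Y k ^ 2 else 0) := by
      intro k
      by_cases h0 : k = 0
      · simp [hw, hz, hP, h0]
      · by_cases h : 2 ≤ (k : ℕ)
        · simp [hw, hz, hP, h0, h]
        · simp [hP, h0, h]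
    rw [Finset.sum_congr rfl (fun k _ => e1 k), Finset.sum_congr rfl (fun k _ => e2 k)]
    have s1 : ∑ k : Fin N, (if 2 ≤ (k : ℕ) then p k * X k ^ 2 else 0) = Tp := by
      rw [hTp, hF, ← Finset.sum_filter]
    have s2 : ∑ k : Fin N, (if k = 0 then (q 0 + ϱ) * Y 0 ^ 2
          else if 2 ≤ (k : ℕ) then q k * Y k ^ 2 else 0)
        = (q 0 + ϱ) * Y 0 ^ 2 + Tq := by
      rw [sum_split hN]
      have g1 : (if (1 : Fin N) = 0 then (q 0 + ϱ) * Y 0 ^ 2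
          else if 2 ≤ ((1 : Fin N) : ℕ) then q 1 * Y 1 ^ 2 else 0) = 0 := by
        simp [hne10, hq1]
      rw [g1, Finset.sum_congr rfl (fun k hk => ?_)]
      · simp [hTq]
        ring
      · have h2 : 2 ≤ (k : ℕ) := (hmemF k).mp hk
        simp [hk0 k h2, h2]
    have s3 : ∑ _x : Unit, (if P (Sum.inr _x) then w (Sum.inr _x) * z (Sum.inr _x) ^ 2 else 0)
        = ϱ * s ^ 2 := by
      simp [hw, hz, hP]
    rw [s1, s2, s3]
    ring
  -- Cauchy–Schwarz
  have key := cs_weighted G a w z hwpos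
  rw [E1, E2, E3] at key
  have hTp0 : 0 ≤ Tp := by
    apply Finset.sum_nonneg
    intro k hk
    have := hpk k ((hmemF k).mp hk)
    positivity
  have hTq0 : 0 ≤ Tq := by
    apply Finset.sum_nonneg
    intro k hk
    have := hqk k ((hmemF k).mp hk)
    positivity
  have hR0 : 0 ≤ ϱ * s ^ 2 + (q 0 + ϱ) * Y 0 ^ 2 + (Tp + Tq) := by
    have h1 : 0 ≤ ϱ * s ^ 2 := mul_nonneg hϱ0.le (sq_nonneg s)
    have h2 : 0 ≤ (q 0 + ϱ) * Y 0 ^ 2 := mul_nonneg hq0ϱ.le (sq_nonneg (Y 0))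
    linarith
  have hbound : (-(p 0)) * X 0 ^ 2 ≤ ϱ * s ^ 2 + (q 0 + ϱ) * Y 0 ^ 2 + (Tp + Tq) := by
    have h1 := mul_le_mul_of_nonneg_left key (neg_nonneg.mpr hp0.le)
    have h2 := mul_le_mul_of_nonneg_right hKp hR0
    have h3 : α 0 ^ 2 * ((-(p 0)) * X 0 ^ 2)
        ≤ α 0 ^ 2 * (ϱ * s ^ 2 + (q 0 + ϱ) * Y 0 ^ 2 + (Tp + Tq)) := by nlinarith [h1, h2]
    exact le_of_mul_le_mul_left h3 hα0
  have gp : ∑ k, p k * X k ^ 2 = p 0 * X 0 ^ 2 + Tp := by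
    rw [sum_split hN (fun k => p k * X k ^ 2), hp1, hTp, hF]
    ring
  have gq : ∑ k, q k * Y k ^ 2 = q 0 * Y 0 ^ 2 + Tq := by
    rw [sum_split hN (fun k => q k * Y k ^ 2), hq1, hTq, hF]
    ring
  rw [gp, gq]
  nlinarith [hbound]



/-- Let `P₀ = diag(p₀,…,p_{N-1},q₀,…,q_{N-1})` with `p₀ < 0`, `q₀ ≤ 0`, `p₁ = q₁ = 0`
and `p_k, q_k > 0` for `k ≥ 2`, and let `A` be the `2 × 2N` matrix with rows `(αᵀ, βᵀ)`
and `(0ᵀ, e₁ᵀ)` where `α₁ = β₁ = 0`. If `ϱ > -q₀ ≥ 0` and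
`∑_{k≥2} (α_k²/p_k + β_k²/q_k) ≤ α₀²/(-p₀) - 1/ϱ - β₀²/(q₀+ϱ)`,
then `P₀ + ϱ AᵀA` is positive semidefinite. -/
theorem P0_add_rho_ATA_posSemidef
    (N : ℕ) [NeZero N] (hN : 2 ≤ N)
    (p q α β : Fin N → ℝ)
    (hp0 : p 0 < 0) (hq0 : q 0 ≤ 0) (hp1 : p 1 = 0) (hq1 : q 1 = 0)
    (hpk : ∀ k : Fin N, 2 ≤ (k : ℕ) → 0 < p k)
    (hqk : ∀ k : Fin N, 2 ≤ (k : ℕ) → 0 < q k)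
    (hα1 : α 1 = 0) (hβ1 : β 1 = 0)
    (A : Matrix (Fin 2) (Fin N ⊕ Fin N) ℝ)
    (hA0 : ∀ j, A 0 j = Sum.elim α β j)
    (hA1 : ∀ j, A 1 j = Sum.elim (fun _ => (0 : ℝ)) (fun i => if i = 0 then 1 else 0) j)
    (ϱ : ℝ) (hϱ : -q 0 < ϱ)
    (hsum : ∑ k ∈ Finset.univ.filter (fun k : Fin N => 2 ≤ (k : ℕ)),
        (α k ^ 2 / p k + β k ^ 2 / q k)
      ≤ α 0 ^ 2 / (-(p 0)) - 1 / ϱ - β 0 ^ 2 / (q 0 + ϱ)) :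
    (Matrix.diagonal (Sum.elim p q) + ϱ • (A.transpose * A)).PosSemidef := by
  classical
  have hH2 : (A.transpose * A).IsHermitian := by
    rw [← Matrix.conjTranspose_eq_transpose_of_trivial]
    exact Matrix.isHermitian_conjTranspose_mul_self A
  have hH3 : (ϱ • (A.transpose * A)).IsHermitian := by
    rw [Matrix.IsHermitian, Matrix.conjTranspose_smul, star_trivial, hH2]
  refine Matrix.PosSemidef.of_dotProduct_mulVec_nonneg ((Matrix.isHermitian_diagonal _).add hH3) fun x => ?_
  set X : Fin N → ℝ := fun k => x (Sum.inl k) with hX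
  set Y : Fin N → ℝ := fun k => x (Sum.inr k) with hY
  have hdiag : x ⬝ᵥ (Matrix.diagonal (Sum.elim p q) *ᵥ x)
      = (∑ k, p k * X k ^ 2) + (∑ k, q k * Y k ^ 2) := by
    simp only [dotProduct, Matrix.mulVec_diagonal, Fintype.sum_sum_type,
      Sum.elim_inl, Sum.elim_inr]
    congr 1 <;> exact Finset.sum_congr rfl (fun k _ => by simp only [hX, hY]; ring)
  have hAx0 : (A *ᵥ x) 0 = (∑ k, α k * X k) + ∑ k, β k * Y k := by
    simp only [Matrix.mulVec, dotProduct]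
    rw [Fintype.sum_sum_type]
    congr 1 <;> exact Finset.sum_congr rfl (fun k _ => by rw [hA0]; simp [hX, hY])
  have hAx1 : (A *ᵥ x) 1 = Y 0 := by
    simp only [Matrix.mulVec, dotProduct]
    rw [Fintype.sum_sum_type]
    simp [hA1, hY, ite_mul, Finset.sum_ite_eq]
  have hquad : x ⬝ᵥ ((A.transpose * A) *ᵥ x) = ((A *ᵥ x) 0) ^ 2 + ((A *ᵥ x) 1) ^ 2 := by
    rw [← Matrix.mulVec_mulVec, dotProduct_mulVec, Matrix.vecMul_transpose,
      dotProduct, Fin.sum_univ_two]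
    ring
  rw [star_trivial, Matrix.add_mulVec, dotProduct_add, Matrix.smul_mulVec,
    dotProduct_smul, hdiag, hquad, hAx0, hAx1, smul_eq_mul]
  exact key_ineq N hN p q α β hp0 hq0 hp1 hq1 hpk hqk hα1 hβ1 ϱ hϱ hsum X Y
end

section
/- Let D be an invertible symmetric positive definite matrix, v a vector, ϱ > 0, p₀ < 0, α₀ ∈ ℝ. Then the 2-block matrix ((p₀ + ϱα₀², ϱα₀vᵀ), (ϱα₀v, D + ϱvvᵀ)) is positive semidefinite if and only if vᵀD⁻¹v ≤ α₀²/(−p₀) − 1/ϱ. -/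
open scoped Matrix

lemma posSemidef_one_dim_iff (A : Matrix (Fin 1) (Fin 1) ℝ) :
    A.PosSemidef ↔ 0 ≤ A 0 0 := by
  constructor
  · intro h
    have := h.dotProduct_mulVec_nonneg (fun _ => 1)
    simpa [dotProduct, Matrix.mulVec, Fin.sum_univ_one] using this
  · intro h
    refine Matrix.posSemidef_iff_dotProduct_mulVec.mpr ⟨?_, fun x => ?_⟩
    · ext i j
      fin_cases i; fin_cases j; simp [Matrix.IsHermitian]
    · have : dotProduct (star x) (A.mulVec x) = A 0 0 * (x 0)^2 := by
        simp [dotProduct, Matrix.mulVec, Fin.sum_univ_one]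
        ring
      rw [this]
      positivity

/-- Schur-complement criterion: for `D` symmetric positive definite (hence invertible),
`ϱ > 0`, `p₀ < 0`, the block matrix `((p₀ + ϱα₀², ϱα₀vᵀ), (ϱα₀v, D + ϱvvᵀ))` is positive
semidefinite if and only if `vᵀD⁻¹v ≤ α₀²/(-p₀) - 1/ϱ`. -/
theorem schur_block_posSemidef_iff
    (n : ℕ) (D : Matrix (Fin n) (Fin n) ℝ) (hD : D.PosDef)
    (v : Fin n → ℝ) (ϱ p₀ α₀ : ℝ) (hϱ : 0 < ϱ) (hp₀ : p₀ < 0) :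
    (Matrix.fromBlocks
        (Matrix.of fun _ _ : Fin 1 => p₀ + ϱ * α₀ ^ 2)
        (Matrix.of fun (_ : Fin 1) (j : Fin n) => ϱ * α₀ * v j)
        (Matrix.of fun (i : Fin n) (_ : Fin 1) => ϱ * α₀ * v i)
        (D + ϱ • Matrix.vecMulVec v v)).PosSemidef
      ↔ dotProduct v (D⁻¹.mulVec v) ≤ α₀ ^ 2 / (-p₀) - 1 / ϱ := by
  classical
  set γ : ℝ := dotProduct v (D⁻¹.mulVec v) with hγ
  have hγ0 : 0 ≤ γ := by
    have := (hD.inv).posSemidef.dotProduct_mulVec_nonneg v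
    simpa [hγ] using this
  set c : ℝ := 1 + ϱ * γ with hc
  have hcpos : 0 < c := by positivity
  have hvecmul : ∀ x : Fin n → ℝ,
      (Matrix.vecMulVec v v).mulVec x = (dotProduct v x) • v := by
    intro x
    funext i
    simp only [Matrix.mulVec, Matrix.vecMulVec, dotProduct, Matrix.of_apply,
      Pi.smul_apply, smul_eq_mul]
    rw [Finset.sum_mul]
    exact Finset.sum_congr rfl fun j _ => by ring
  -- the rank-one part is PSD
  have hsm : (ϱ • Matrix.vecMulVec v v).PosSemidef := by
    refine Matrix.posSemidef_iff_dotProduct_mulVec.mpr ⟨?_, fun x => ?_⟩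
    · ext i j
      simp [Matrix.vecMulVec, Matrix.conjTranspose, mul_comm]
    · rw [Matrix.smul_mulVec, hvecmul, dotProduct_smul, dotProduct_smul,
        star_trivial, smul_eq_mul, smul_eq_mul, dotProduct_comm x v]
      nlinarith [mul_self_nonneg (dotProduct v x), sq_nonneg (dotProduct v x)]
  set B : Matrix (Fin n) (Fin n) ℝ := D + ϱ • Matrix.vecMulVec v v with hBdef
  have hB : B.PosDef := hD.add_posSemidef hsm
  have hBunit : IsUnit B.det := isUnit_iff_ne_zero.mpr hB.det_pos.ne'
  have hDunit : IsUnit D.det := isUnit_iff_ne_zero.mpr hD.det_pos.ne'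
  haveI : Invertible B := B.invertibleOfIsUnitDet hBunit
  -- key: B⁻¹ *ᵥ v = c⁻¹ • (D⁻¹ *ᵥ v)
  have hBu : B.mulVec (c⁻¹ • D⁻¹.mulVec v) = v := by
    rw [Matrix.mulVec_smul]
    have h1 : B.mulVec (D⁻¹.mulVec v) = c • v := by
      rw [hBdef, Matrix.add_mulVec, Matrix.mulVec_mulVec, Matrix.mul_nonsing_inv D hDunit,
        Matrix.one_mulVec, Matrix.smul_mulVec, hvecmul]
      funext i
      simp [hc]
      ring
    rw [h1, smul_smul, inv_mul_cancel₀ hcpos.ne', one_smul]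
  have hBinv : B⁻¹.mulVec v = c⁻¹ • D⁻¹.mulVec v := by
    conv_lhs => rw [← hBu]
    rw [Matrix.mulVec_mulVec, Matrix.nonsing_inv_mul B hBunit, Matrix.one_mulVec]
  have hdot : dotProduct v (B⁻¹.mulVec v) = c⁻¹ * γ := by
    rw [hBinv, dotProduct_smul, hγ]
    simp
  -- Schur complement criterion
  have hherm : (Matrix.of fun (i : Fin n) (_ : Fin 1) => ϱ * α₀ * v i)
      = (Matrix.of fun (_ : Fin 1) (j : Fin n) => ϱ * α₀ * v j)ᴴ := by
    ext i j
    simp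
  rw [hherm]
  rw [Matrix.PosDef.fromBlocks₂₂ _ _ hB]
  rw [posSemidef_one_dim_iff]
  have hentry : (Matrix.of (fun _ _ : Fin 1 => p₀ + ϱ * α₀ ^ 2) -
      (Matrix.of fun (_ : Fin 1) (j : Fin n) => ϱ * α₀ * v j) * B⁻¹ *
        (Matrix.of fun (_ : Fin 1) (j : Fin n) => ϱ * α₀ * v j)ᴴ) 0 0
      = (p₀ + ϱ * α₀ ^ 2) - ϱ^2 * α₀^2 * (c⁻¹ * γ) := by
    have : ((Matrix.of fun (_ : Fin 1) (j : Fin n) => ϱ * α₀ * v j) * B⁻¹ *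
        (Matrix.of fun (_ : Fin 1) (j : Fin n) => ϱ * α₀ * v j)ᴴ) 0 0
        = ϱ^2 * α₀^2 * dotProduct v (B⁻¹.mulVec v) := by
      simp only [Matrix.mul_apply, Matrix.conjTranspose_apply, Matrix.of_apply,
        dotProduct, Matrix.mulVec, star_trivial]
      simp only [Finset.sum_mul, Finset.mul_sum]
      rw [Finset.sum_comm]
      refine Finset.sum_congr rfl fun i _ => ?_
      refine Finset.sum_congr rfl fun j _ => ?_
      ring
    rw [Matrix.sub_apply, this, hdot]
    simp
  rw [hentry]
  -- final algebra
  have hcne : c ≠ 0 := hcpos.ne'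
  have h1 : (p₀ + ϱ * α₀ ^ 2) - ϱ ^ 2 * α₀ ^ 2 * (c⁻¹ * γ) = (p₀ * c + ϱ * α₀ ^ 2) / c := by
    field_simp
    rw [hc]
    ring
  have hpne : p₀ ≠ 0 := hp₀.ne
  have hϱne : ϱ ≠ 0 := hϱ.ne'
  have hrhs : α₀ ^ 2 / (-p₀) - 1 / ϱ = (ϱ * α₀ ^ 2 + p₀) / (ϱ * (-p₀)) := by
    rw [div_sub_div _ _ (neg_ne_zero.mpr hpne) hϱne, mul_comm (-p₀) ϱ]
    congr 1
    ring
  rw [h1, hrhs, le_div_iff₀ hcpos, le_div_iff₀ (mul_pos hϱ (neg_pos.mpr hp₀)), zero_mul, hc]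
  constructor <;> intro h <;> nlinarith [h, hγ0, hϱ, hp₀]
end

section
/- Consider the feasibility sets of the nonconvex quadratic problem (P): min xᵀP₀x + 2q₀ᵀx + r₀ subject to xᵀP_lx + 2q_lᵀx + r_l ≤ 0 (l = 1,…,d), Ax = b, and its enhanced semidefinite relaxation (D3): min tr(P₀X) + 2q₀ᵀx + r₀ subject to tr(P_lX) + 2q_lᵀx + r_l ≤ 0, Ax = b, AX = bxᵀ, X ⪰ xxᵀ. If P_l ⪰ 0 for l ≥ 1 and there exists a matrix V with P₀ + (1/2)(VᵀA + AᵀV) ⪰ 0, then the optimal values of (P) and (D3) coincide; moreover if (x̃, X̃) is optimal for (D3) then x̃ is optimal for (P). -/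
open Matrix

lemma my_trace_mul_vecMulVec {n : ℕ} (P : Matrix (Fin n) (Fin n) ℝ) (x : Fin n → ℝ) :
    (P * Matrix.vecMulVec x x).trace = dotProduct x (P.mulVec x) := by
  simp only [Matrix.trace, Matrix.diag, Matrix.mul_apply, Matrix.vecMulVec_apply,
    dotProduct, Matrix.mulVec, Finset.mul_sum]
  exact Finset.sum_congr rfl fun i _ => Finset.sum_congr rfl fun j _ => by ring

lemma my_trace_mul_nonneg {n : ℕ} {P M : Matrix (Fin n) (Fin n) ℝ}
    (hP : P.PosSemidef) (hM : M.PosSemidef) : 0 ≤ (P * M).trace := by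
  have hsym : ∀ a c, P a c = P c a := fun a c => by
    have := congrFun (congrFun hP.1 a) c
    simpa [Matrix.conjTranspose_apply] using this.symm
  obtain ⟨k, v, rfl⟩ := Matrix.posSemidef_iff_eq_sum_vecMulVec.mp hM
  rw [Finset.mul_sum, Matrix.trace_sum]
  refine Finset.sum_nonneg fun i _ => ?_
  have h2 := hP.dotProduct_mulVec_nonneg (v i)
  simp only [star_trivial] at h2 ⊢
  rw [my_trace_mul_vecMulVec]; exact h2

lemma my_A_mul_vecMulVec {n m : ℕ} (A : Matrix (Fin m) (Fin n) ℝ) (x : Fin n → ℝ)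
    (b : Fin m → ℝ) (hAx : A.mulVec x = b) :
    A * Matrix.vecMulVec x x = Matrix.of (fun (i : Fin m) (j : Fin n) => b i * x j) := by
  ext i j
  simp only [Matrix.mul_apply, Matrix.vecMulVec_apply, Matrix.of_apply]
  rw [← hAx]
  simp only [Matrix.mulVec, dotProduct, Finset.sum_mul]
  exact Finset.sum_congr rfl fun k _ => by ring

lemma my_key {n m : ℕ} {P0 : Matrix (Fin n) (Fin n) ℝ} {A : Matrix (Fin m) (Fin n) ℝ}
    {V : Matrix (Fin m) (Fin n) ℝ}
    (hV : (P0 + (1 / 2 : ℝ) • (V.transpose * A + A.transpose * V)).PosSemidef)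
    {x : Fin n → ℝ} {X : Matrix (Fin n) (Fin n) ℝ} {b : Fin m → ℝ}
    (hAx : A.mulVec x = b)
    (hAX : A * X = Matrix.of (fun (i : Fin m) (j : Fin n) => b i * x j))
    (hM : (X - Matrix.vecMulVec x x).PosSemidef) :
    dotProduct x (P0.mulVec x) ≤ (P0 * X).trace := by
  set M := X - Matrix.vecMulVec x x with hMdef
  have hAM : A * M = 0 := by
    rw [hMdef, Matrix.mul_sub, hAX, my_A_mul_vecMulVec A x b hAx, sub_self]
  have hMA : M * A.transpose = 0 := by
    have : (A * M).transpose = 0 := by rw [hAM]; simp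
    rw [Matrix.transpose_mul] at this
    have hsym : Mᵀ = M := by
      have := hM.1; simpa [Matrix.conjTranspose, Matrix.IsSymm] using this
    rwa [hsym] at this
  have hS : ((V.transpose * A + A.transpose * V) * M).trace = 0 := by
    rw [Matrix.add_mul, Matrix.trace_add]
    have h1 : (V.transpose * A * M).trace = 0 := by
      rw [Matrix.mul_assoc, hAM, Matrix.mul_zero, Matrix.trace_zero]
    have h2 : (A.transpose * V * M).trace = 0 := by
      rw [Matrix.mul_assoc, Matrix.trace_mul_comm, Matrix.mul_assoc, hMA,
        Matrix.mul_zero, Matrix.trace_zero]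
    rw [h1, h2, add_zero]
  have htr : 0 ≤ (P0 * M).trace := by
    have := my_trace_mul_nonneg hV hM
    rwa [Matrix.add_mul, Matrix.trace_add, Matrix.smul_mul, Matrix.trace_smul, hS,
      smul_zero, add_zero] at this
  have hX : X = M + Matrix.vecMulVec x x := by rw [hMdef]; abel
  calc dotProduct x (P0.mulVec x) = (P0 * Matrix.vecMulVec x x).trace :=
        (my_trace_mul_vecMulVec P0 x).symm
    _ ≤ (P0 * M).trace + (P0 * Matrix.vecMulVec x x).trace := by linarith
    _ = (P0 * X).trace := by rw [hX, Matrix.mul_add, Matrix.trace_add]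

lemma my_lb {n : ℕ} {Q : Matrix (Fin n) (Fin n) ℝ} (hQ : Q.PosSemidef)
    {x : Fin n → ℝ} {X : Matrix (Fin n) (Fin n) ℝ}
    (hM : (X - Matrix.vecMulVec x x).PosSemidef) :
    dotProduct x (Q.mulVec x) ≤ (Q * X).trace := by
  have htr := my_trace_mul_nonneg hQ hM
  have hX : X = (X - Matrix.vecMulVec x x) + Matrix.vecMulVec x x := by abel
  calc dotProduct x (Q.mulVec x) = (Q * Matrix.vecMulVec x x).trace :=
        (my_trace_mul_vecMulVec Q x).symm
    _ ≤ (Q * (X - Matrix.vecMulVec x x)).trace + (Q * Matrix.vecMulVec x x).trace := by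
        linarith
    _ = (Q * X).trace := by rw [← Matrix.trace_add, ← Matrix.mul_add, ← hX]



/-- Equivalence of the nonconvex quadratic problem (P) and its enhanced semidefinite
relaxation (D3): if every `P_l ⪰ 0` (l ≥ 1), there is `V` with
`P₀ + (1/2)(VᵀA + AᵀV) ⪰ 0`, and (P) is feasible, then the optimal values of (P) and
(D3) coincide (as extended reals), and any optimal `(x̃, X̃)` of (D3) yields an optimal
`x̃` for (P). -/
theorem enhanced_sdp_relaxation_equiv
    (n m d : ℕ)
    (P0 : Matrix (Fin n) (Fin n) ℝ) (P : Fin d → Matrix (Fin n) (Fin n) ℝ)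
    (q0 : Fin n → ℝ) (q : Fin d → Fin n → ℝ) (r0 : ℝ) (r : Fin d → ℝ)
    (A : Matrix (Fin m) (Fin n) ℝ) (b : Fin m → ℝ)
    (hP : ∀ l, (P l).PosSemidef)
    (hV : ∃ V : Matrix (Fin m) (Fin n) ℝ,
      (P0 + (1 / 2 : ℝ) • (V.transpose * A + A.transpose * V)).PosSemidef)
    (FeasP : (Fin n → ℝ) → Prop)
    (hFeasP : ∀ x, FeasP x ↔
      ((∀ l, dotProduct x ((P l).mulVec x) + 2 * dotProduct (q l) x + r l ≤ 0) ∧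
        A.mulVec x = b))
    (objP : (Fin n → ℝ) → ℝ)
    (hobjP : ∀ x, objP x = dotProduct x (P0.mulVec x) + 2 * dotProduct q0 x + r0)
    (FeasD : (Fin n → ℝ) → Matrix (Fin n) (Fin n) ℝ → Prop)
    (hFeasD : ∀ x X, FeasD x X ↔
      ((∀ l, ((P l) * X).trace + 2 * dotProduct (q l) x + r l ≤ 0) ∧
        A.mulVec x = b ∧
        A * X = Matrix.of (fun (i : Fin m) (j : Fin n) => b i * x j) ∧
        (X - Matrix.vecMulVec x x).PosSemidef))
    (objD : (Fin n → ℝ) → Matrix (Fin n) (Fin n) ℝ → ℝ)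
    (hobjD : ∀ x X, objD x X = (P0 * X).trace + 2 * dotProduct q0 x + r0)
    (hfeas : ∃ x, FeasP x) :
    sInf {v : EReal | ∃ x, FeasP x ∧ v = (objP x : EReal)} =
      sInf {v : EReal | ∃ x X, FeasD x X ∧ v = (objD x X : EReal)} ∧
    ∀ x X, FeasD x X →
      (objD x X : EReal) = sInf {v : EReal | ∃ x X, FeasD x X ∧ v = (objD x X : EReal)} →
      (FeasP x ∧ (objP x : EReal) = sInf {v : EReal | ∃ x, FeasP x ∧ v = (objP x : EReal)}) := by
  obtain ⟨V, hVpsd⟩ := hV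
  set SP := {v : EReal | ∃ x, FeasP x ∧ v = (objP x : EReal)} with hSP
  set SD := {v : EReal | ∃ x X, FeasD x X ∧ v = (objD x X : EReal)} with hSD
  -- every P-feasible x gives a D-feasible pair with the same objective
  have hPD : ∀ x, FeasP x → FeasD x (Matrix.vecMulVec x x) ∧
      objD x (Matrix.vecMulVec x x) = objP x := by
    intro x hx
    rw [hFeasP] at hx
    obtain ⟨hcon, hAx⟩ := hx
    constructor
    · rw [hFeasD]
      refine ⟨fun l => ?_, hAx, my_A_mul_vecMulVec A x b hAx, ?_⟩
      · rw [my_trace_mul_vecMulVec]; exact hcon l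
      · rw [sub_self]; exact Matrix.PosSemidef.zero
    · rw [hobjD, hobjP, my_trace_mul_vecMulVec]
  -- every D-feasible pair yields a P-feasible point with no larger objective
  have hDP : ∀ x X, FeasD x X → FeasP x ∧ objP x ≤ objD x X := by
    intro x X hxX
    rw [hFeasD] at hxX
    obtain ⟨hcon, hAx, hAX, hM⟩ := hxX
    constructor
    · rw [hFeasP]
      refine ⟨fun l => le_trans ?_ (hcon l), hAx⟩
      have := my_lb (hP l) hM
      linarith
    · rw [hobjP, hobjD]
      have := my_key hVpsd hAx hAX hM
      linarith
  have hsub : SP ⊆ SD := by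
    rintro v ⟨x, hx, rfl⟩
    exact ⟨x, Matrix.vecMulVec x x, (hPD x hx).1, by rw [(hPD x hx).2]⟩
  have h1 : sInf SD ≤ sInf SP := sInf_le_sInf hsub
  have h2 : sInf SP ≤ sInf SD := by
    refine le_sInf ?_
    rintro v ⟨x, X, hxX, rfl⟩
    obtain ⟨hfp, hle⟩ := hDP x X hxX
    calc sInf SP ≤ (objP x : EReal) := sInf_le ⟨x, hfp, rfl⟩
      _ ≤ (objD x X : EReal) := EReal.coe_le_coe_iff.mpr hle
  have heq : sInf SP = sInf SD := le_antisymm h2 h1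
  refine ⟨heq, ?_⟩
  intro x X hxX hopt
  obtain ⟨hfp, hle⟩ := hDP x X hxX
  refine ⟨hfp, le_antisymm ?_ (sInf_le ⟨x, hfp, rfl⟩)⟩
  calc (objP x : EReal) ≤ (objD x X : EReal) := EReal.coe_le_coe_iff.mpr hle
    _ = sInf SD := hopt
    _ = sInf SP := heq.symm
end
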